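/- arXiv:2304.12565 — 2 statements merged into one kernel-verified Lean document; each statement's English description precedes it below -/
import Mathlib

section
/- Let s, k, t, m, n_1, ..., n_t be positive integers with n_1 ≥ n_2 ≥ ... ≥ n_t ≥ k, let H be a graph on m vertices, and let n = n_1 + ... + n_t + s + m. Then the adjacency spectral radius of K_s ∨ (H ∪ K_{n_1} ∪ ... ∪ K_{n_t}) is at most that of K_s ∨ (H ∪ K_{n−m−s−k(t−1)} ∪ (t−1)K_k), with equality if and only if n_2 = ... = n_t = k. -/
open Matrix Finset
open scoped InnerProductSpace

section SpecLemmas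
variable {V : Type*} [Fintype V] [DecidableEq V] {A : Matrix V V ℝ}

noncomputable def maxEig [Nonempty V] (hA : A.IsHermitian) : ℝ :=
  Finset.univ.sup' Finset.univ_nonempty hA.eigenvalues

lemma mulVec_sum' {ι : Type*} (s : Finset ι) (A : Matrix V V ℝ) (f : ι → V → ℝ) :
    A *ᵥ (∑ j ∈ s, f j) = ∑ j ∈ s, A *ᵥ f j := by
  funext i
  simp only [Matrix.mulVec, dotProduct, Finset.sum_apply, Finset.mul_sum]
  exact Finset.sum_comm

lemma dotProduct_sum' {ι : Type*} (s : Finset ι) (u : V → ℝ) (f : ι → V → ℝ) :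
    u ⬝ᵥ (∑ j ∈ s, f j) = ∑ j ∈ s, u ⬝ᵥ f j := by
  simp [dotProduct, Finset.mul_sum]
  exact Finset.sum_comm

lemma sum_dotProduct' {ι : Type*} (s : Finset ι) (u : V → ℝ) (f : ι → V → ℝ) :
    (∑ j ∈ s, f j) ⬝ᵥ u = ∑ j ∈ s, f j ⬝ᵥ u := by
  rw [dotProduct_comm, dotProduct_sum' s u f]
  exact Finset.sum_congr rfl fun j _ => dotProduct_comm _ _

lemma inner_real_dot (u v : EuclideanSpace ℝ V) : ⟪u, v⟫_ℝ = (⇑u : V → ℝ) ⬝ᵥ ⇑v := by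
  rw [EuclideanSpace.inner_eq_star_dotProduct]
  simp [dotProduct, mul_comm]

-- expansion of a vector in the eigenbasis, in plain function language
lemma eigen_expansion (hA : A.IsHermitian) (x : V → ℝ) :
    x = ∑ j, ((⇑(hA.eigenvectorBasis j) : V → ℝ) ⬝ᵥ x) • (⇑(hA.eigenvectorBasis j) : V → ℝ) := by
  have h := hA.eigenvectorBasis.sum_repr' (WithLp.toLp 2 x : EuclideanSpace ℝ V)
  have h2 : ∀ j, ⟪hA.eigenvectorBasis j, (WithLp.toLp 2 x : EuclideanSpace ℝ V)⟫_ℝ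
      = (⇑(hA.eigenvectorBasis j) : V → ℝ) ⬝ᵥ x := fun j => inner_real_dot _ _
  funext v
  have h3 := congrFun (congrArg (fun (z : EuclideanSpace ℝ V) => (⇑z : V → ℝ)) h) v
  simp only at h3
  rw [show x v = _ from h3.symm]
  simp only [h2]
  simp [WithLp.ofLp_sum, WithLp.ofLp_smul]

lemma eigen_dot (hA : A.IsHermitian) (i j : V) :
    (⇑(hA.eigenvectorBasis i) : V → ℝ) ⬝ᵥ (⇑(hA.eigenvectorBasis j) : V → ℝ)
      = if i = j then 1 else 0 := by
  rw [← inner_real_dot]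
  rcases eq_or_ne i j with h | h
  · subst h
    rw [if_pos rfl, real_inner_self_eq_norm_mul_norm, hA.eigenvectorBasis.orthonormal.1 i]
    norm_num
  · simp [h, hA.eigenvectorBasis.orthonormal.2 h]

lemma dot_mulVec_eigen (hA : A.IsHermitian) (x : V → ℝ) :
    x ⬝ᵥ (A *ᵥ x) = ∑ j, hA.eigenvalues j * ((⇑(hA.eigenvectorBasis j) : V → ℝ) ⬝ᵥ x) ^ 2 := by
  set b : V → V → ℝ := fun j => (⇑(hA.eigenvectorBasis j) : V → ℝ) with hb
  set c : V → ℝ := fun j => b j ⬝ᵥ x with hc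
  have hx : x = ∑ j, c j • b j := eigen_expansion hA x
  have hAx : A *ᵥ x = ∑ j, (c j * hA.eigenvalues j) • b j := by
    conv_lhs => rw [hx]
    rw [mulVec_sum']
    refine Finset.sum_congr rfl fun j _ => ?_
    rw [Matrix.mulVec_smul, hA.mulVec_eigenvectorBasis j, smul_smul]
  rw [hAx, dotProduct_sum']
  refine Finset.sum_congr rfl fun j _ => ?_
  rw [dotProduct_smul]
  have hxb : x ⬝ᵥ b j = c j := dotProduct_comm x (b j)
  rw [smul_eq_mul, hxb]; ring

lemma dot_self_eigen (hA : A.IsHermitian) (x : V → ℝ) :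
    x ⬝ᵥ x = ∑ j, ((⇑(hA.eigenvectorBasis j) : V → ℝ) ⬝ᵥ x) ^ 2 := by
  set b : V → V → ℝ := fun j => (⇑(hA.eigenvectorBasis j) : V → ℝ) with hb
  set c : V → ℝ := fun j => b j ⬝ᵥ x with hc
  have hx : x = ∑ j, c j • b j := eigen_expansion hA x
  conv_lhs => rw [hx]
  rw [sum_dotProduct']
  refine Finset.sum_congr rfl fun j _ => ?_
  rw [smul_dotProduct, ← hx]
  have hbx : b j ⬝ᵥ x = c j := rfl
  rw [smul_eq_mul, hbx]; ring

lemma rayleigh_le [Nonempty V] (hA : A.IsHermitian) (x : V → ℝ) :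
    x ⬝ᵥ (A *ᵥ x) ≤ maxEig hA * (x ⬝ᵥ x) := by
  rw [dot_mulVec_eigen hA, dot_self_eigen hA, Finset.mul_sum]
  refine Finset.sum_le_sum fun j _ => ?_
  have h1 : hA.eigenvalues j ≤ maxEig hA := Finset.le_sup' _ (Finset.mem_univ j)
  have h2 : (0:ℝ) ≤ ((⇑(hA.eigenvectorBasis j) : V → ℝ) ⬝ᵥ x) ^ 2 := sq_nonneg _
  nlinarith

lemma dot_self_pos {x : V → ℝ} (hx : x ≠ 0) : 0 < x ⬝ᵥ x := by
  have h1 : (0:ℝ) ≤ x ⬝ᵥ x := Finset.sum_nonneg fun i _ => mul_self_nonneg _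
  rcases h1.lt_or_eq with h | h
  · exact h
  · exfalso; apply hx; funext i
    have := (Finset.sum_eq_zero_iff_of_nonneg (fun i _ => mul_self_nonneg (x i))).1 h.symm i
      (Finset.mem_univ i)
    have := mul_self_eq_zero.1 this
    simpa using this

lemma eigenvalue_le_maxEig [Nonempty V] (hA : A.IsHermitian) {μ : ℝ} {v : V → ℝ}
    (hv : v ≠ 0) (h : A *ᵥ v = μ • v) : μ ≤ maxEig hA := by
  have h1 : v ⬝ᵥ (A *ᵥ v) = μ * (v ⬝ᵥ v) := by rw [h, dotProduct_smul, smul_eq_mul]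
  have h2 := rayleigh_le hA v
  rw [h1] at h2
  exact le_of_mul_le_mul_right (by linarith) (dot_self_pos hv)

lemma exists_maxEig_vec [Nonempty V] (hA : A.IsHermitian) :
    ∃ v : V → ℝ, v ≠ 0 ∧ A *ᵥ v = maxEig hA • v := by
  obtain ⟨j, -, hj⟩ := Finset.exists_mem_eq_sup' (Finset.univ_nonempty (α := V)) hA.eigenvalues
  refine ⟨⇑(hA.eigenvectorBasis j), ?_, ?_⟩
  · intro h0
    have := eigen_dot hA j j
    rw [show (⇑(hA.eigenvectorBasis j) : V → ℝ) = 0 from h0] at this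
    simp at this
  · rw [hA.mulVec_eigenvectorBasis j, ← hj]; rfl

lemma maximizer_is_eigenvec [Nonempty V] (hA : A.IsHermitian) {x : V → ℝ}
    (h : x ⬝ᵥ (A *ᵥ x) = maxEig hA * (x ⬝ᵥ x)) : A *ᵥ x = maxEig hA • x := by
  set b : V → V → ℝ := fun j => (⇑(hA.eigenvectorBasis j) : V → ℝ) with hb
  set c : V → ℝ := fun j => b j ⬝ᵥ x with hc
  have key : ∀ j, (maxEig hA - hA.eigenvalues j) * c j ^ 2 = 0 := by
    have hsum : ∑ j, (maxEig hA - hA.eigenvalues j) * c j ^ 2 = 0 := by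
      have h1 := dot_mulVec_eigen hA x
      have h2 := dot_self_eigen hA x
      rw [h1, h2, Finset.mul_sum] at h
      simp only [sub_mul]
      rw [Finset.sum_sub_distrib, h]
      ring
    intro j
    refine (Finset.sum_eq_zero_iff_of_nonneg fun i _ => ?_).1 hsum j (Finset.mem_univ j)
    have hle : hA.eigenvalues i ≤ maxEig hA := Finset.le_sup' _ (Finset.mem_univ i)
    exact mul_nonneg (by linarith) (sq_nonneg _)
  have hx : x = ∑ j, c j • b j := eigen_expansion hA x
  have hAx : A *ᵥ x = ∑ j, (c j * hA.eigenvalues j) • b j := by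
    conv_lhs => rw [hx]
    rw [mulVec_sum']
    refine Finset.sum_congr rfl fun j _ => ?_
    rw [Matrix.mulVec_smul, hA.mulVec_eigenvectorBasis j, smul_smul]
  rw [hAx]
  conv_rhs => rw [hx]
  rw [Finset.smul_sum]
  refine Finset.sum_congr rfl fun j _ => ?_
  rw [smul_smul]
  congr 1
  have := key j
  rcases mul_eq_zero.1 this with h1 | h1
  · have : hA.eigenvalues j = maxEig hA := by linarith [sub_eq_zero.1 h1]
    rw [this, mul_comm]
  · have : c j = 0 := by
      have := sq_eq_zero_iff.1 h1; exact this
    rw [this]; ring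

end SpecLemmas

open SimpleGraph

open scoped Classical in
/-- The adjacency spectral radius of a finite simple graph: the largest real
eigenvalue of its adjacency matrix. -/
noncomputable def specRad {V : Type*} [Fintype V] (G : SimpleGraph V) : ℝ :=
  sSup {μ : ℝ | ∃ v : V → ℝ, v ≠ 0 ∧
    Matrix.mulVec (Matrix.of fun i j => if G.Adj i j then (1:ℝ) else 0) v = μ • v}

/-- The join of two simple graphs: their disjoint union together with all
edges between the two parts. -/
def gJoin {α β : Type*} (G : SimpleGraph α) (H : SimpleGraph β) : SimpleGraph (α ⊕ β) :=
  (G ⊕g H) ⊔ SimpleGraph.fromRel (fun x y => x.isLeft ∧ y.isRight)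

/-- The disjoint union of complete graphs `K_{n 0} ∪ … ∪ K_{n (t-1)}`. -/
def cliqueUnion {t : ℕ} (n : Fin t → ℕ) : SimpleGraph (Σ i, Fin (n i)) where
  Adj x y := x.1 = y.1 ∧ x ≠ y
  symm := ⟨fun _ _ h => ⟨h.1.symm, h.2.symm⟩⟩
  loopless := ⟨fun _ h => h.2 rfl⟩

section GraphSpec
variable {V : Type*} [Fintype V]

open scoped Classical in
noncomputable def adjM (G : SimpleGraph V) : Matrix V V ℝ :=
  Matrix.of fun i j => if G.Adj i j then (1:ℝ) else 0

lemma specRad_def' (G : SimpleGraph V) : specRad G = sSup {μ : ℝ | ∃ v : V → ℝ, v ≠ 0 ∧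
    (adjM G) *ᵥ v = μ • v} := rfl

lemma adjM_isHermitian (G : SimpleGraph V) : (adjM G).IsHermitian := by
  unfold Matrix.IsHermitian
  ext i j
  simp only [Matrix.conjTranspose_apply, adjM, Matrix.of_apply, star_trivial]
  by_cases h : G.Adj i j
  · rw [if_pos h, if_pos h.symm]
  · rw [if_neg h, if_neg fun h' => h h'.symm]

lemma adjM_nonneg (G : SimpleGraph V) (i j : V) : 0 ≤ adjM G i j := by
  unfold adjM; dsimp only [Matrix.of_apply]; split <;> norm_num

variable [DecidableEq V] [Nonempty V]

lemma specRad_eq_maxEig (G : SimpleGraph V) : specRad G = maxEig (adjM_isHermitian G) := by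
  rw [specRad_def']
  apply le_antisymm
  · apply csSup_le
    · obtain ⟨v, hv, he⟩ := exists_maxEig_vec (adjM_isHermitian G)
      exact ⟨maxEig (adjM_isHermitian G), v, hv, he⟩
    · rintro μ ⟨v, hv, he⟩
      exact eigenvalue_le_maxEig _ hv he
  · apply le_csSup
    · refine ⟨maxEig (adjM_isHermitian G), ?_⟩
      rintro μ ⟨v, hv, he⟩
      exact eigenvalue_le_maxEig _ hv he
    · obtain ⟨v, hv, he⟩ := exists_maxEig_vec (adjM_isHermitian G)
      exact ⟨v, hv, he⟩

lemma rayleigh_le_specRad (G : SimpleGraph V) (x : V → ℝ) :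
    x ⬝ᵥ ((adjM G) *ᵥ x) ≤ specRad G * (x ⬝ᵥ x) := by
  rw [specRad_eq_maxEig]; exact rayleigh_le _ x

lemma exists_nonneg_eigvec (G : SimpleGraph V) :
    ∃ x : V → ℝ, (∀ u, 0 ≤ x u) ∧ x ≠ 0 ∧ (adjM G) *ᵥ x = specRad G • x := by
  obtain ⟨v, hv, he⟩ := exists_maxEig_vec (adjM_isHermitian G)
  set x : V → ℝ := fun u => |v u| with hxdef
  have hxv : x ⬝ᵥ x = v ⬝ᵥ v := by
    apply Finset.sum_congr rfl
    intro u _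
    simp [hxdef, abs_mul_abs_self]
  have h1 : v ⬝ᵥ ((adjM G) *ᵥ v) ≤ x ⬝ᵥ ((adjM G) *ᵥ x) := by
    unfold dotProduct Matrix.mulVec dotProduct
    refine Finset.sum_le_sum fun u _ => ?_
    rw [Finset.mul_sum, Finset.mul_sum]
    refine Finset.sum_le_sum fun w _ => ?_
    have ha := adjM_nonneg G u w
    have : v u * (adjM G u w * v w) = adjM G u w * (v u * v w) := by ring
    rw [this]
    have : x u * (adjM G u w * x w) = adjM G u w * (|v u| * |v w|) := by rw [hxdef]; ring
    rw [this]
    apply mul_le_mul_of_nonneg_left _ ha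
    calc v u * v w ≤ |v u * v w| := le_abs_self _
    _ = |v u| * |v w| := abs_mul _ _
  have h2 : v ⬝ᵥ ((adjM G) *ᵥ v) = maxEig (adjM_isHermitian G) * (v ⬝ᵥ v) := by
    rw [he, dotProduct_smul, smul_eq_mul]
  have h3 := rayleigh_le (adjM_isHermitian G) x
  have h4 : x ⬝ᵥ ((adjM G) *ᵥ x) = maxEig (adjM_isHermitian G) * (x ⬝ᵥ x) := by
    rw [hxv]; rw [hxv] at h3; linarith
  have hx0 : x ≠ 0 := by
    intro h0
    apply hv
    funext u
    have := congrFun h0 u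
    simpa [hxdef] using this
  refine ⟨x, fun u => abs_nonneg _, hx0, ?_⟩
  rw [specRad_eq_maxEig]
  exact maximizer_is_eigenvec _ h4

end GraphSpec

section adjacency
variable {α β : Type*} (G : SimpleGraph α) (K : SimpleGraph β)

@[simp] lemma gJoin_adj_ll (a b : α) : (gJoin G K).Adj (Sum.inl a) (Sum.inl b) ↔ G.Adj a b := by
  simp [gJoin, SimpleGraph.fromRel_adj]

@[simp] lemma gJoin_adj_lr (a : α) (b : β) : (gJoin G K).Adj (Sum.inl a) (Sum.inr b) := by
  simp [gJoin, SimpleGraph.fromRel_adj]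

@[simp] lemma gJoin_adj_rl (b : β) (a : α) : (gJoin G K).Adj (Sum.inr b) (Sum.inl a) := by
  simp [gJoin, SimpleGraph.fromRel_adj]

@[simp] lemma gJoin_adj_rr (a b : β) : (gJoin G K).Adj (Sum.inr a) (Sum.inr b) ↔ K.Adj a b := by
  simp [gJoin, SimpleGraph.fromRel_adj]

end adjacency

lemma count_lt (a b : ℕ) (h : a ≤ b) :
    (Finset.univ.filter (fun c : Fin b => (c : ℕ) < a)).card = a := by
  rw [Finset.card_filter]
  rw [Fin.sum_univ_eq_sum_range (fun c => if c < a then 1 else 0) b]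
  rw [← Finset.card_filter]
  have : (Finset.range b).filter (fun i => i < a) = Finset.range a := by
    ext i; simp; omega
  rw [this, Finset.card_range]

open Finset

lemma part_sq_ineq {t : ℕ} (i0 : Fin t) (S d : Fin t → ℝ)
    (hd : ∀ j, 0 ≤ d j) (hdi : d i0 = 0) (hS : ∀ j, S j ≤ S i0)
    (T : Fin t → ℝ)
    (hT : ∀ j, T j = if j = i0 then S i0 + ∑ j', d j' else S j - d j) :
    (∑ j, S j ^ 2 ≤ ∑ j, T j ^ 2) ∧
    ((∃ j, 0 < d j) → ∑ j, S j ^ 2 < ∑ j, T j ^ 2) := by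
  classical
  set E := Finset.univ.erase i0 with hE
  set D := ∑ j', d j' with hD
  have hDE : D = ∑ j ∈ E, d j := by
    rw [hD, ← Finset.add_sum_erase _ d (Finset.mem_univ i0), hdi, zero_add]
  have hsplitS : ∑ j, S j ^ 2 = S i0 ^ 2 + ∑ j ∈ E, S j ^ 2 :=
    (Finset.add_sum_erase _ _ (Finset.mem_univ i0)).symm
  have hsplitT : ∑ j, T j ^ 2 = (S i0 + D) ^ 2 + ∑ j ∈ E, (S j - d j) ^ 2 := by
    rw [← Finset.add_sum_erase _ (fun j => T j ^ 2) (Finset.mem_univ i0)]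
    congr 1
    · rw [hT i0, if_pos rfl]
    · refine Finset.sum_congr rfl fun j hj => ?_
      rw [hT j, if_neg (Finset.ne_of_mem_erase hj)]
  have hexp : ∑ j ∈ E, (S j - d j) ^ 2
      = ∑ j ∈ E, S j ^ 2 - ∑ j ∈ E, (2 * S j * d j) + ∑ j ∈ E, d j ^ 2 := by
    rw [← Finset.sum_sub_distrib, ← Finset.sum_add_distrib]
    refine Finset.sum_congr rfl fun j _ => by ring
  have hmono : ∑ j ∈ E, (2 * S j * d j) ≤ ∑ j ∈ E, (2 * S i0 * d j) := by
    refine Finset.sum_le_sum fun j _ => ?_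
    have := hS j; have := hd j; nlinarith
  have hDsum : ∑ j ∈ E, (2 * S i0 * d j) = 2 * S i0 * D := by
    rw [hDE, Finset.mul_sum]
  have hdsq : (0:ℝ) ≤ ∑ j ∈ E, d j ^ 2 := Finset.sum_nonneg fun j _ => sq_nonneg _
  have hDsq : (0:ℝ) ≤ D ^ 2 := sq_nonneg _
  constructor
  · rw [hsplitS, hsplitT, hexp]; nlinarith
  · rintro ⟨j0, hj0⟩
    have hj0E : j0 ∈ E := Finset.mem_erase.2 ⟨fun h => by rw [h, hdi] at hj0; exact lt_irrefl _ hj0,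
      Finset.mem_univ _⟩
    have hdsq' : (0:ℝ) < ∑ j ∈ E, d j ^ 2 :=
      Finset.sum_pos' (fun j _ => sq_nonneg _) ⟨j0, hj0E, by positivity⟩
    rw [hsplitS, hsplitT, hexp]; nlinarith

lemma double_sum_fiber {β : Type*} [Fintype β] {t : ℕ} (f : β → Fin t) (z : β → ℝ) :
    ∑ p, ∑ q, (if f p = f q then (1:ℝ) else 0) * z p * z q
      = ∑ j, (∑ p ∈ Finset.univ.filter (fun p => f p = j), z p) ^ 2 := by
  classical
  set F : Fin t → ℝ := fun j => ∑ p ∈ Finset.univ.filter (fun p => f p = j), z p with hF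
  have h1 : ∀ p, ∑ q, (if f p = f q then (1:ℝ) else 0) * z p * z q = z p * F (f p) := by
    intro p
    rw [hF]
    simp only [Finset.sum_filter]
    rw [Finset.mul_sum]
    refine Finset.sum_congr rfl fun q _ => ?_
    by_cases h : f q = f p
    · rw [if_pos h.symm, if_pos h]; ring
    · rw [if_neg (fun h' => h h'.symm), if_neg h]; ring
  calc ∑ p, ∑ q, (if f p = f q then (1:ℝ) else 0) * z p * z q = ∑ p, z p * F (f p) :=
        Finset.sum_congr rfl fun p _ => h1 p
  _ = ∑ j, ∑ p ∈ Finset.univ.filter (fun p => f p = j), (z p * F (f p)) :=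
        (Finset.sum_fiberwise _ f _).symm
  _ = ∑ j, F j ^ 2 := by
        refine Finset.sum_congr rfl fun j _ => ?_
        have : ∑ p ∈ Finset.univ.filter (fun p => f p = j), (z p * F (f p))
            = ∑ p ∈ Finset.univ.filter (fun p => f p = j), (z p * F j) :=
          Finset.sum_congr rfl fun p hp => by rw [(Finset.mem_filter.1 hp).2]
        rw [this, ← Finset.sum_mul, sq]

lemma dot_mulVec_expand {V : Type*} [Fintype V] (B : Matrix V V ℝ) (x : V → ℝ) :
    x ⬝ᵥ (B *ᵥ x) = ∑ u, ∑ v, B u v * x u * x v := by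
  unfold dotProduct Matrix.mulVec dotProduct
  refine Finset.sum_congr rfl fun u _ => ?_
  rw [Finset.mul_sum]
  refine Finset.sum_congr rfl fun v _ => by ring

lemma dot_mulVec_reindex {V V' : Type*} [Fintype V] [Fintype V'] (e : V ≃ V')
    (B : Matrix V' V' ℝ) (x : V → ℝ) :
    (x ∘ e.symm) ⬝ᵥ (B *ᵥ (x ∘ e.symm)) = ∑ u, ∑ v, B (e u) (e v) * x u * x v := by
  rw [dot_mulVec_expand]
  rw [← Equiv.sum_comp e (fun u' => ∑ v', B u' v' * (x ∘ e.symm) u' * (x ∘ e.symm) v')]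
  refine Finset.sum_congr rfl fun u _ => ?_
  rw [← Equiv.sum_comp e (fun v' => B (e u) v' * (x ∘ e.symm) (e u) * (x ∘ e.symm) v')]
  refine Finset.sum_congr rfl fun v _ => by simp

lemma dot_self_reindex {V V' : Type*} [Fintype V] [Fintype V'] (e : V ≃ V') (x : V → ℝ) :
    (x ∘ e.symm) ⬝ᵥ (x ∘ e.symm) = x ⬝ᵥ x := by
  unfold dotProduct
  rw [← Equiv.sum_comp e (fun u' => (x ∘ e.symm) u' * (x ∘ e.symm) u')]
  refine Finset.sum_congr rfl fun u _ => by simp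

lemma eigvec_pos {s : ℕ} (hs : 0 < s) {β : Type*} [Fintype β] [Nonempty β] (K : SimpleGraph β)
    {lam : ℝ} {x : Fin s ⊕ β → ℝ} (hx0 : ∀ u, 0 ≤ x u) (hxne : x ≠ 0)
    (heig : adjM (gJoin (⊤ : SimpleGraph (Fin s)) K) *ᵥ x = lam • x) :
    ∀ u, 0 < x u := by
  classical
  set G := gJoin (⊤ : SimpleGraph (Fin s)) K with hG
  have hzero : ∀ u, x u = 0 → ∀ v, G.Adj u v → x v = 0 := by
    intro u hu v hv
    have h1 : (adjM G *ᵥ x) u = 0 := by rw [heig]; simp [hu]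
    have h2 : (adjM G *ᵥ x) u = ∑ w, adjM G u w * x w := rfl
    have h3 : ∀ w, 0 ≤ adjM G u w * x w := fun w => mul_nonneg (adjM_nonneg G u w) (hx0 w)
    have h4 := (Finset.sum_eq_zero_iff_of_nonneg (fun w _ => h3 w)).1 (h2 ▸ h1) v (Finset.mem_univ v)
    have h5 : adjM G u v = 1 := by
      show (if G.Adj u v then (1:ℝ) else 0) = 1
      rw [if_pos hv]
    rw [h5, one_mul] at h4
    exact h4
  have key : ∀ u, x u = 0 → x = 0 := by
    intro u hu
    obtain ⟨b0⟩ := ‹Nonempty β›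
    have a0 : Fin s := ⟨0, hs⟩
    rcases u with a | b
    · have hr : ∀ b : β, x (Sum.inr b) = 0 := fun b => hzero _ hu _ (gJoin_adj_lr _ _ a b)
      have hl : ∀ a' : Fin s, x (Sum.inl a') = 0 := fun a' =>
        hzero _ (hr b0) _ (gJoin_adj_rl _ _ b0 a')
      funext v; rcases v with a' | b' <;> simp [hl, hr]
    · have hl : ∀ a' : Fin s, x (Sum.inl a') = 0 := fun a' => hzero _ hu _ (gJoin_adj_rl _ _ b a')
      have hr : ∀ b' : β, x (Sum.inr b') = 0 := fun b' =>
        hzero _ (hl a0) _ (gJoin_adj_lr _ _ a0 b')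
      funext v; rcases v with a' | b' <;> simp [hl, hr]
  intro u
  rcases (hx0 u).lt_or_eq with h | h
  · exact h
  · exact absurd (key u h.symm) hxne

set_option maxHeartbeats 2000000 in
theorem spectral_clique_union_join (s k t m : ℕ) (hs : 0 < s) (hk : 0 < k)
    (ht : 0 < t) (hm : 0 < m) (nf : Fin t → ℕ)
    (hmono : ∀ i j : Fin t, i ≤ j → nf j ≤ nf i) (hnk : ∀ i, k ≤ nf i)
    (H : SimpleGraph (Fin m)) (n : ℕ) (hn : n = (∑ i, nf i) + s + m) :
    specRad (gJoin (⊤ : SimpleGraph (Fin s)) (H ⊕g cliqueUnion nf)) ≤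
      specRad (gJoin (⊤ : SimpleGraph (Fin s)) (H ⊕g cliqueUnion
        (fun i : Fin t => if i = ⟨0, ht⟩ then n - m - s - k * (t - 1) else k))) ∧
    (specRad (gJoin (⊤ : SimpleGraph (Fin s)) (H ⊕g cliqueUnion nf)) =
      specRad (gJoin (⊤ : SimpleGraph (Fin s)) (H ⊕g cliqueUnion
        (fun i : Fin t => if i = ⟨0, ht⟩ then n - m - s - k * (t - 1) else k))) ↔
      ∀ i : Fin t, i ≠ ⟨0, ht⟩ → nf i = k) := by
  classical
  set i00 : Fin t := ⟨0, ht⟩ with hi00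
  set nf' : Fin t → ℕ := fun i : Fin t => if i = ⟨0, ht⟩ then n - m - s - k * (t - 1) else k
    with hnf'
  set G := gJoin (⊤ : SimpleGraph (Fin s)) (H ⊕g cliqueUnion nf) with hGdef
  set G' := gJoin (⊤ : SimpleGraph (Fin s)) (H ⊕g cliqueUnion nf') with hG'def
  -- arithmetic facts
  have htk : t * k ≤ ∑ i, nf i := by
    calc t * k = ∑ _i : Fin t, k := by simp [mul_comm]
    _ ≤ ∑ i, nf i := Finset.sum_le_sum fun i _ => hnk i
  have hkt1 : k * (t - 1) ≤ ∑ i, nf i := by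
    have h1 : k * (t - 1) ≤ t * k := by
      rw [Nat.mul_comm]
      exact Nat.mul_le_mul_right k (Nat.sub_le t 1)
    exact le_trans h1 htk
  have hNs : n - m - s = ∑ i, nf i := by omega
  have hbig : nf' i00 = ∑ i, nf i - k * (t - 1) := by
    have h1 : nf' i00 = n - m - s - k * (t - 1) := by
      show (if i00 = ⟨0, ht⟩ then n - m - s - k * (t - 1) else k) = _; exact if_pos rfl
    rw [h1, hNs]
  have hsumerase : ∀ f : Fin t → ℕ, (∀ i, i ≠ i00 → f i = k) →
      ∑ i ∈ Finset.univ.erase i00, f i = (t - 1) * k := by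
    intro f hf
    rw [Finset.sum_congr rfl (fun i hi => hf i (Finset.ne_of_mem_erase hi))]
    rw [Finset.sum_const, Finset.card_erase_of_mem (Finset.mem_univ _), Finset.card_univ,
      Fintype.card_fin, smul_eq_mul]
  have hsum' : ∑ i, nf' i = ∑ i, nf i := by
    rw [← Finset.add_sum_erase _ nf' (Finset.mem_univ i00), hbig,
      hsumerase nf' (fun i hi => by
        show (if i = ⟨0, ht⟩ then n - m - s - k * (t - 1) else k) = k; exact if_neg hi),
      Nat.mul_comm (t-1) k, Nat.sub_add_cancel hkt1]
  -- the "equality case": nf' = nf when all small cliques have size k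
  have eqcase : (∀ i, i ≠ i00 → nf i = k) → nf' = nf := by
    intro h
    have htot : ∑ j, nf j = nf i00 + (t - 1) * k := by
      rw [← Finset.add_sum_erase _ nf (Finset.mem_univ i00), hsumerase nf h]
    funext i
    by_cases hi : i = i00
    · rw [hi, hbig, htot, Nat.mul_comm (t-1) k, Nat.add_sub_cancel]
    · show (if i = ⟨0, ht⟩ then n - m - s - k * (t - 1) else k) = nf i
      rw [if_neg hi, h i hi]
  -- nonemptiness
  haveI hne1 : Nonempty (Fin s ⊕ (Fin m ⊕ Σ i, Fin (nf i))) := ⟨Sum.inl ⟨0, hs⟩⟩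
  haveI hne2 : Nonempty (Fin s ⊕ (Fin m ⊕ Σ i, Fin (nf' i))) := ⟨Sum.inl ⟨0, hs⟩⟩
  haveI hne3 : Nonempty (Fin m ⊕ Σ i, Fin (nf i)) := ⟨Sum.inl ⟨0, hm⟩⟩
  -- Perron-type eigenvector of G
  obtain ⟨x, hx0, hxne, heig⟩ := exists_nonneg_eigvec G
  have hxpos : ∀ u, 0 < x u := eigvec_pos hs (H ⊕g cliqueUnion nf) hx0 hxne heig
  -- fiber sums
  set xt : (Σ i, Fin (nf i)) → ℝ := fun p => x (Sum.inr (Sum.inr p)) with hxt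
  set S : Fin t → ℝ := fun i =>
    ∑ p ∈ Finset.univ.filter (fun p : Σ i, Fin (nf i) => p.1 = i), xt p with hS
  obtain ⟨istar, -, histar⟩ := Finset.exists_max_image Finset.univ S ⟨i00, Finset.mem_univ _⟩
  have hSmax : ∀ j, S j ≤ S istar := fun j => histar j (Finset.mem_univ j)
  set g : (Σ i, Fin (nf i)) → Fin t :=
    fun p => if p.1 = istar ∨ k ≤ (p.2 : ℕ) then istar else p.1 with hg
  set T : Fin t → ℝ := fun j =>
    ∑ p ∈ Finset.univ.filter (fun p : Σ i, Fin (nf i) => g p = j), xt p with hT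
  set d : Fin t → ℝ := fun j => if j = istar then 0 else
    ∑ p ∈ Finset.univ.filter (fun p : Σ i, Fin (nf i) => p.1 = j ∧ k ≤ (p.2 : ℕ)), xt p with hd
  have hfib : ∀ j, j ≠ istar → Finset.univ.filter (fun p : Σ i, Fin (nf i) => g p = j)
      = Finset.univ.filter (fun p => p.1 = j ∧ (p.2 : ℕ) < k) := by
    intro j hj
    apply Finset.filter_congr
    intro p _
    constructor
    · intro hp
      by_cases hc : p.1 = istar ∨ k ≤ (p.2 : ℕ)
      · exfalso; apply hj; rw [← hp, hg]; simp only [if_pos hc]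
      · rw [hg] at hp; simp only [if_neg hc] at hp
        push_neg at hc
        exact ⟨hp, by omega⟩
    · rintro ⟨h1, h2⟩
      have hc : ¬(p.1 = istar ∨ k ≤ (p.2 : ℕ)) := by
        push_neg
        exact ⟨by rw [h1]; exact hj, by omega⟩
      rw [hg]; simp only [if_neg hc]; exact h1
  have hd0 : ∀ j, 0 ≤ d j := by
    intro j; rw [hd]; dsimp only
    split
    · exact le_refl 0
    · exact Finset.sum_nonneg fun p _ => hx0 _
  have hdistar : d istar = 0 := by rw [hd]; simp
  have hTj : ∀ j, j ≠ istar → T j = S j - d j := by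
    intro j hj
    have h1 : ∑ p ∈ (Finset.univ.filter (fun p : Σ i, Fin (nf i) => p.1 = j)).filter
          (fun p => k ≤ (p.2 : ℕ)), xt p
        + ∑ p ∈ (Finset.univ.filter (fun p : Σ i, Fin (nf i) => p.1 = j)).filter
          (fun p => ¬ k ≤ (p.2 : ℕ)), xt p
        = S j := Finset.sum_filter_add_sum_filter_not _ _ _
    rw [Finset.filter_filter, Finset.filter_filter] at h1
    have e1 : T j = ∑ p ∈ Finset.univ.filter
        (fun p : Σ i, Fin (nf i) => p.1 = j ∧ ¬ k ≤ (p.2 : ℕ)), xt p := by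
      rw [hT]; dsimp only; rw [hfib j hj]
      congr 1
      apply Finset.filter_congr
      intro p _
      constructor
      · rintro ⟨ha, hb⟩; exact ⟨ha, by omega⟩
      · rintro ⟨ha, hb⟩; exact ⟨ha, by omega⟩
    have e2 : d j = ∑ p ∈ Finset.univ.filter
        (fun p : Σ i, Fin (nf i) => p.1 = j ∧ k ≤ (p.2 : ℕ)), xt p := by
      rw [hd]; dsimp only; rw [if_neg hj]
    rw [e1, e2]
    linarith
  have htotS : ∑ j, S j = ∑ p, xt p := Finset.sum_fiberwise _ _ _
  have htotT : ∑ j, T j = ∑ p, xt p := Finset.sum_fiberwise _ _ _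
  have hTstar : T istar = S istar + ∑ j', d j' := by
    have h1 : ∑ j ∈ Finset.univ.erase istar, T j
        = ∑ j ∈ Finset.univ.erase istar, (S j - d j) :=
      Finset.sum_congr rfl fun j hj => hTj j (Finset.ne_of_mem_erase hj)
    have h2 : T istar + ∑ j ∈ Finset.univ.erase istar, T j = ∑ j, T j :=
      Finset.add_sum_erase _ T (Finset.mem_univ istar)
    have h3 : S istar + ∑ j ∈ Finset.univ.erase istar, S j = ∑ j, S j :=
      Finset.add_sum_erase _ S (Finset.mem_univ istar)
    have h4 : d istar + ∑ j ∈ Finset.univ.erase istar, d j = ∑ j', d j' :=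
      Finset.add_sum_erase _ d (Finset.mem_univ istar)
    have h5 : ∑ j ∈ Finset.univ.erase istar, (S j - d j)
        = ∑ j ∈ Finset.univ.erase istar, S j - ∑ j ∈ Finset.univ.erase istar, d j :=
      Finset.sum_sub_distrib _ _
    rw [hdistar, zero_add] at h4
    linarith [htotS, htotT]
  have hT' : ∀ j, T j = if j = istar then S istar + ∑ j', d j' else S j - d j := by
    intro j
    by_cases hj : j = istar
    · rw [hj, if_pos rfl]; exact hTstar
    · rw [if_neg hj]; exact hTj j hj
  have key : ∑ j, S j ^ 2 ≤ ∑ j, T j ^ 2 ∧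
      ((∃ j, 0 < d j) → ∑ j, S j ^ 2 < ∑ j, T j ^ 2) :=
    part_sq_ineq istar S d hd0 hdistar hSmax T hT'
  -- the bijection
  set σp : Equiv.Perm (Fin t) := Equiv.swap i00 istar with hσp
  have hcardk : ∀ j, j ≠ istar → Fintype.card {p : Σ i, Fin (nf i) // g p = j} = k := by
    intro j hj
    rw [Fintype.card_subtype, hfib j hj, Finset.card_filter]
    rw [← Finset.univ_sigma_univ, Finset.sum_sigma]
    rw [Finset.sum_eq_single j]
    · have : ∀ c : Fin (nf j), ((j : Fin t) = j ∧ (c:ℕ) < k) ↔ ((c:ℕ) < k) := by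
        intro c; simp
      calc ∑ c : Fin (nf j), (if ((⟨j, c⟩ : Σ i, Fin (nf i)).1 = j ∧ ((⟨j,c⟩ : Σ i, Fin (nf i)).2 : ℕ) < k) then 1 else 0)
          = ∑ c : Fin (nf j), (if (c:ℕ) < k then 1 else 0) := by
            refine Finset.sum_congr rfl fun c _ => ?_
            exact if_congr (this c) rfl rfl
      _ = (Finset.univ.filter (fun c : Fin (nf j) => (c : ℕ) < k)).card := by
            rw [Finset.card_filter]
      _ = k := count_lt k (nf j) (hnk j)
    · intro i _ hij
      refine Finset.sum_eq_zero fun c _ => ?_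
      rw [if_neg]
      simp only [not_and]
      intro hc; exact absurd hc hij
    · intro hju; exact absurd (Finset.mem_univ j) hju
  have hcards : Fintype.card {p : Σ i, Fin (nf i) // g p = istar} = ∑ i, nf i - k * (t-1) := by
    have htotal : ∑ j, (Finset.univ.filter (fun p : Σ i, Fin (nf i) => g p = j)).card
        = ∑ i, nf i := by
      rw [← Finset.card_eq_sum_card_fiberwise (fun p _ => Finset.mem_univ (g p))]
      rw [Finset.card_univ]
      simp [Fintype.card_sigma]
    have hsplit : (Finset.univ.filter (fun p : Σ i, Fin (nf i) => g p = istar)).card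
        + ∑ j ∈ Finset.univ.erase istar,
            (Finset.univ.filter (fun p : Σ i, Fin (nf i) => g p = j)).card
        = ∑ j, (Finset.univ.filter (fun p : Σ i, Fin (nf i) => g p = j)).card :=
      Finset.add_sum_erase _ (fun j => (Finset.univ.filter (fun p : Σ i, Fin (nf i) => g p = j)).card) (Finset.mem_univ istar)
    have herase : ∑ j ∈ Finset.univ.erase istar,
        (Finset.univ.filter (fun p : Σ i, Fin (nf i) => g p = j)).card = (t-1) * k := by
      rw [Finset.sum_congr rfl (fun j hj => by
        rw [← Fintype.card_subtype, hcardk j (Finset.ne_of_mem_erase hj)])]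
      rw [Finset.sum_const, Finset.card_erase_of_mem (Finset.mem_univ _), Finset.card_univ,
        Fintype.card_fin, smul_eq_mul]
    rw [Fintype.card_subtype]
    have hmc : (t-1) * k = k * (t-1) := Nat.mul_comm _ _
    omega
  have hMσ : ∀ j, Fintype.card {p : Σ i, Fin (nf i) // g p = j} = nf' (σp j) := by
    intro j
    by_cases hj : j = istar
    · rw [hj, hcards]
      have : σp istar = i00 := Equiv.swap_apply_right _ _
      rw [this, hbig]
    · rw [hcardk j hj]
      have hσ : σp j ≠ i00 := by
        intro hcon
        apply hj
        have : σp istar = i00 := Equiv.swap_apply_right _ _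
        exact σp.injective (hcon.trans this.symm)
      show k = (if σp j = ⟨0, ht⟩ then n - m - s - k * (t - 1) else k)
      rw [if_neg hσ]
  set Ψ : (Σ i, Fin (nf i)) ≃ (Σ i, Fin (nf' i)) :=
    ((Equiv.sigmaFiberEquiv g).symm.trans
      (Equiv.sigmaCongrRight fun j => Fintype.equivFinOfCardEq (hMσ j))).trans
      (Equiv.sigmaCongrLeft (β := fun i => Fin (nf' i)) σp) with hΨ
  have hΨfst : ∀ p, (Ψ p).1 = σp (g p) := fun p => rfl
  set E : (Fin s ⊕ (Fin m ⊕ Σ i, Fin (nf i))) ≃ (Fin s ⊕ (Fin m ⊕ Σ i, Fin (nf' i))) :=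
    (Equiv.refl (Fin s)).sumCongr ((Equiv.refl (Fin m)).sumCongr Ψ) with hE
  set y : (Fin s ⊕ (Fin m ⊕ Σ i, Fin (nf' i))) → ℝ := x ∘ E.symm with hy
  -- quadratic form difference
  set D : (Fin s ⊕ (Fin m ⊕ Σ i, Fin (nf i))) → (Fin s ⊕ (Fin m ⊕ Σ i, Fin (nf i))) → ℝ :=
    fun u v =>
      match u, v with
      | Sum.inr (Sum.inr p), Sum.inr (Sum.inr q) =>
          ((if g p = g q then (1:ℝ) else 0) - (if p.1 = q.1 then (1:ℝ) else 0)) * xt p * xt q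
      | _, _ => 0
    with hD
  have hGone : ∀ u v, G.Adj u v → adjM G u v = 1 := fun u v h => by simp [adjM, h]
  have hGzero : ∀ u v, ¬ G.Adj u v → adjM G u v = 0 := fun u v h => by simp [adjM, h]
  have hG'one : ∀ u v, G'.Adj u v → adjM G' u v = 1 := fun u v h => by simp [adjM, h]
  have hG'zero : ∀ u v, ¬ G'.Adj u v → adjM G' u v = 0 := fun u v h => by simp [adjM, h]
  have hsame : ∀ u v, (G'.Adj (E u) (E v) ↔ G.Adj u v) → D u v = 0 →
      adjM G' (E u) (E v) * x u * x v = adjM G u v * x u * x v + D u v := by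
    intro u v hiff hD0
    rw [hD0, add_zero]
    by_cases h : G.Adj u v
    · rw [hGone u v h, hG'one _ _ (hiff.2 h)]
    · rw [hGzero u v h, hG'zero _ _ (fun hh => h (hiff.1 hh))]
  have hEl : ∀ a : Fin s, E (Sum.inl a) = Sum.inl a := fun _ => rfl
  have hEm : ∀ b : Fin m, E (Sum.inr (Sum.inl b)) = Sum.inr (Sum.inl b) := fun _ => rfl
  have hEr : ∀ p, E (Sum.inr (Sum.inr p)) = Sum.inr (Sum.inr (Ψ p)) := fun _ => rfl
  have hclique' : ∀ (P Q : Σ i, Fin (nf' i)), (cliqueUnion nf').Adj P Q ↔ (P.1 = Q.1 ∧ P ≠ Q) :=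
    fun P Q => Iff.rfl
  have hsumr' : ∀ (P Q : Σ i, Fin (nf' i)),
      (H ⊕g cliqueUnion nf').Adj (Sum.inr P) (Sum.inr Q) ↔ (cliqueUnion nf').Adj P Q :=
    fun P Q => Iff.rfl
  have hsumr : ∀ (P Q : Σ i, Fin (nf i)),
      (H ⊕g cliqueUnion nf).Adj (Sum.inr P) (Sum.inr Q) ↔ (cliqueUnion nf).Adj P Q :=
    fun P Q => Iff.rfl
  have hAA : ∀ u v, adjM G' (E u) (E v) * x u * x v = adjM G u v * x u * x v + D u v := by
    intro u v
    rcases u with a | w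
    · rcases v with b | w'
      · exact hsame _ _ (by rw [hGdef, hG'def, hEl, hEl]; simp) rfl
      · rcases w' with b | q
        · exact hsame _ _ (by rw [hGdef, hG'def, hEl, hEm]; simp) rfl
        · exact hsame _ _ (by rw [hGdef, hG'def, hEl, hEr]; simp) rfl
    · rcases w with b | p
      · rcases v with a | w'
        · exact hsame _ _ (by rw [hGdef, hG'def, hEm, hEl]; simp) rfl
        · rcases w' with b' | q
          · exact hsame _ _ (by rw [hGdef, hG'def, hEm, hEm]; simp) rfl
          · exact hsame _ _ (by rw [hGdef, hG'def, hEm, hEr]; simp) rfl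
      · rcases v with a | w'
        · exact hsame _ _ (by rw [hGdef, hG'def, hEr, hEl]; simp) rfl
        · rcases w' with b' | q
          · exact hsame _ _ (by rw [hGdef, hG'def, hEr, hEm]; simp) rfl
          · -- the sigma-sigma case
            have hiff1 : G'.Adj (E (Sum.inr (Sum.inr p))) (E (Sum.inr (Sum.inr q)))
                ↔ (g p = g q ∧ p ≠ q) := by
              rw [hG'def, hEr, hEr, gJoin_adj_rr, hsumr', hclique',
                hΨfst p, hΨfst q, Equiv.apply_eq_iff_eq σp]
              constructor
              · rintro ⟨h1, h2⟩; exact ⟨h1, fun hh => h2 (by rw [hh])⟩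
              · rintro ⟨h1, h2⟩; exact ⟨h1, fun hh => h2 (Ψ.injective hh)⟩
            have hiff2 : G.Adj (Sum.inr (Sum.inr p)) (Sum.inr (Sum.inr q))
                ↔ (p.1 = q.1 ∧ p ≠ q) := by
              rw [hGdef, gJoin_adj_rr, hsumr]
              exact Iff.rfl
            have hDval : D (Sum.inr (Sum.inr p)) (Sum.inr (Sum.inr q))
                = ((if g p = g q then (1:ℝ) else 0) - (if p.1 = q.1 then (1:ℝ) else 0))
                  * xt p * xt q := rfl
            have hxp : x (Sum.inr (Sum.inr p)) = xt p := rfl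
            have hxq : x (Sum.inr (Sum.inr q)) = xt q := rfl
            rw [hDval, hxp, hxq]
            by_cases hpq : p = q
            · subst hpq
              rw [hG'zero _ _ (fun hh => (hiff1.1 hh).2 rfl),
                hGzero _ _ (fun hh => (hiff2.1 hh).2 rfl)]
              rw [if_pos rfl, if_pos rfl]
              ring
            · by_cases h1 : g p = g q <;> by_cases h2 : p.1 = q.1
              · rw [hG'one _ _ (hiff1.2 ⟨h1, hpq⟩), hGone _ _ (hiff2.2 ⟨h2, hpq⟩),
                  if_pos h1, if_pos h2]; ring
              · rw [hG'one _ _ (hiff1.2 ⟨h1, hpq⟩),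
                  hGzero _ _ (fun hh => h2 (hiff2.1 hh).1), if_pos h1, if_neg h2]; ring
              · rw [hG'zero _ _ (fun hh => h1 (hiff1.1 hh).1),
                  hGone _ _ (hiff2.2 ⟨h2, hpq⟩), if_neg h1, if_pos h2]; ring
              · rw [hG'zero _ _ (fun hh => h1 (hiff1.1 hh).1),
                  hGzero _ _ (fun hh => h2 (hiff2.1 hh).1), if_neg h1, if_neg h2]; ring
  have hD0l : ∀ a v, D (Sum.inl a) v = 0 := by
    intro a v; rcases v with b | w
    · rfl
    · rcases w with b | q <;> rfl
  have hD0m : ∀ b v, D (Sum.inr (Sum.inl b)) v = 0 := by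
    intro b v; rcases v with a | w
    · rfl
    · rcases w with b' | q <;> rfl
  have hD0rl : ∀ p a, D (Sum.inr (Sum.inr p)) (Sum.inl a) = 0 := fun p a => rfl
  have hD0rm : ∀ p b, D (Sum.inr (Sum.inr p)) (Sum.inr (Sum.inl b)) = 0 := fun p b => rfl
  have hDrr : ∀ p q, D (Sum.inr (Sum.inr p)) (Sum.inr (Sum.inr q))
      = ((if g p = g q then (1:ℝ) else 0) - (if p.1 = q.1 then (1:ℝ) else 0))
        * xt p * xt q := fun p q => rfl
  have hDsum : ∑ u, ∑ v, D u v
      = ∑ p, ∑ q, ((if g p = g q then (1:ℝ) else 0) - (if p.1 = q.1 then (1:ℝ) else 0))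
        * xt p * xt q := by
    simp only [Fintype.sum_sum_type, hD0l, hD0m, hD0rl, hD0rm, hDrr,
      Finset.sum_const_zero, zero_add, add_zero]
  have hfibT : ∑ p, ∑ q, (if g p = g q then (1:ℝ) else 0) * xt p * xt q = ∑ j, T j ^ 2 :=
    double_sum_fiber g xt
  have hfibS : ∑ p, ∑ q, (if p.1 = q.1 then (1:ℝ) else 0) * xt p * xt q = ∑ j, S j ^ 2 :=
    double_sum_fiber (fun p => p.1) xt
  have hdiff : y ⬝ᵥ (adjM G' *ᵥ y) =
      x ⬝ᵥ (adjM G *ᵥ x) + (∑ j, T j ^ 2 - ∑ j, S j ^ 2) := by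
    calc y ⬝ᵥ (adjM G' *ᵥ y) = ∑ u, ∑ v, adjM G' (E u) (E v) * x u * x v := by
          rw [hy]; exact dot_mulVec_reindex E (adjM G') x
    _ = ∑ u, ∑ v, (adjM G u v * x u * x v + D u v) := by
          refine Finset.sum_congr rfl fun u _ => Finset.sum_congr rfl fun v _ => hAA u v
    _ = (∑ u, ∑ v, adjM G u v * x u * x v) + ∑ u, ∑ v, D u v := by
          simp only [Finset.sum_add_distrib]
    _ = x ⬝ᵥ (adjM G *ᵥ x) + (∑ j, T j ^ 2 - ∑ j, S j ^ 2) := by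
          rw [← dot_mulVec_expand, hDsum]
          congr 1
          have : ∑ p, ∑ q, ((if g p = g q then (1:ℝ) else 0)
              - (if p.1 = q.1 then (1:ℝ) else 0)) * xt p * xt q
              = (∑ p, ∑ q, (if g p = g q then (1:ℝ) else 0) * xt p * xt q)
                - ∑ p, ∑ q, (if p.1 = q.1 then (1:ℝ) else 0) * xt p * xt q := by
            simp only [sub_mul, Finset.sum_sub_distrib]
          rw [this, hfibT, hfibS]
  -- Rayleigh chain
  have hxx : 0 < x ⬝ᵥ x := dot_self_pos hxne
  have hray : x ⬝ᵥ (adjM G *ᵥ x) = specRad G * (x ⬝ᵥ x) := by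
    rw [heig, dotProduct_smul, smul_eq_mul]
  have hyy : y ⬝ᵥ y = x ⬝ᵥ x := dot_self_reindex E x
  have hup : y ⬝ᵥ (adjM G' *ᵥ y) ≤ specRad G' * (x ⬝ᵥ x) := by
    have := rayleigh_le_specRad G' y
    rwa [hyy] at this
  have hle : specRad G ≤ specRad G' := by
    have h1 : specRad G * (x ⬝ᵥ x) ≤ specRad G' * (x ⬝ᵥ x) := by
      rw [← hray]
      have := key.1
      linarith [hdiff, hup]
    exact le_of_mul_le_mul_right h1 hxx
  have hstrict : (∃ i, i ≠ i00 ∧ nf i ≠ k) → specRad G < specRad G' := by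
    rintro ⟨i1, hi1, hik⟩
    have hgt : k < nf i1 := lt_of_le_of_ne (hnk i1) (Ne.symm hik)
    -- find j0 ≠ istar with k < nf j0
    have hj0 : ∃ j0, j0 ≠ istar ∧ k < nf j0 := by
      by_cases hc : istar = i00
      · exact ⟨i1, by rw [hc]; exact hi1, hgt⟩
      · refine ⟨i00, fun h => hc h.symm, ?_⟩
        have := hmono i00 i1 (by simp [hi00, Fin.le_def])
        omega
    obtain ⟨j0, hj0ne, hj0k⟩ := hj0
    have hdpos : 0 < d j0 := by
      rw [hd]; simp only; rw [if_neg hj0ne]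
      refine Finset.sum_pos (fun p _ => hxpos _) ?_
      exact ⟨⟨j0, ⟨k, hj0k⟩⟩, by simp⟩
    have hlt : ∑ j, S j ^ 2 < ∑ j, T j ^ 2 := key.2 ⟨j0, hdpos⟩
    have h1 : specRad G * (x ⬝ᵥ x) < specRad G' * (x ⬝ᵥ x) := by
      rw [← hray]; linarith [hdiff, hup]
    exact lt_of_mul_lt_mul_right h1 (le_of_lt hxx)
  refine ⟨hle, ⟨?_, ?_⟩⟩
  · intro heq
    by_contra hcon
    push_neg at hcon
    obtain ⟨i1, hi1, hik⟩ := hcon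
    exact absurd heq (ne_of_lt (hstrict ⟨i1, hi1, hik⟩))
  · intro h
    have hnfeq : nf' = nf := eqcase h
    have haux : ∀ f f' : Fin t → ℕ, f = f' →
        specRad (gJoin (⊤ : SimpleGraph (Fin s)) (H ⊕g cliqueUnion f)) =
        specRad (gJoin (⊤ : SimpleGraph (Fin s)) (H ⊕g cliqueUnion f')) := by
      intro f f' hff; subst hff; rfl
    rw [hG'def, hGdef]
    exact haux nf nf' hnfeq.symm
end

section
/- Let l be an even positive integer and p, q odd positive integers with p + q = l. Then the adjacency spectral radius of K_p + K_q is at most that of K_{l-1}^+, with equality if and only if K_p + K_q is isomorphic to K_{l-1}^+ (i.e., p = 1 or q = 1). -/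
open SimpleGraph

/-- `K_p + K_q`: the disjoint union of `K_p` and `K_q` together with one extra
edge joining a vertex of `K_p` to a vertex of `K_q`. -/
def KplusK (p q : ℕ) (hp : 0 < p) (hq : 0 < q) : SimpleGraph (Fin p ⊕ Fin q) :=
  ((⊤ : SimpleGraph (Fin p)) ⊕g (⊤ : SimpleGraph (Fin q))) ⊔
    SimpleGraph.fromEdgeSet {s(Sum.inl ⟨0, hp⟩, Sum.inr ⟨0, hq⟩)}

open scoped Classical

/-! ### Adjacency description of `KplusK` -/

lemma KplusK_adj_inl_inl {p q : ℕ} {hp : 0 < p} {hq : 0 < q} (a b : Fin p) :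
    (KplusK p q hp hq).Adj (Sum.inl a) (Sum.inl b) ↔ a ≠ b := by
  simp [KplusK, SimpleGraph.sum_adj, Sym2.eq_iff]

lemma KplusK_adj_inl_inr {p q : ℕ} {hp : 0 < p} {hq : 0 < q} (a : Fin p) (c : Fin q) :
    (KplusK p q hp hq).Adj (Sum.inl a) (Sum.inr c) ↔ a = ⟨0, hp⟩ ∧ c = ⟨0, hq⟩ := by
  simp [KplusK, SimpleGraph.sum_adj, Sym2.eq_iff]

lemma KplusK_adj_inr_inl {p q : ℕ} {hp : 0 < p} {hq : 0 < q} (c : Fin q) (a : Fin p) :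
    (KplusK p q hp hq).Adj (Sum.inr c) (Sum.inl a) ↔ a = ⟨0, hp⟩ ∧ c = ⟨0, hq⟩ := by
  simp [KplusK, SimpleGraph.sum_adj, Sym2.eq_iff, and_comm]

lemma KplusK_adj_inr_inr {p q : ℕ} {hp : 0 < p} {hq : 0 < q} (c d : Fin q) :
    (KplusK p q hp hq).Adj (Sum.inr c) (Sum.inr d) ↔ c ≠ d := by
  simp [KplusK, SimpleGraph.sum_adj, Sym2.eq_iff]

/-! ### Generic upper bounds for `specRad` -/

lemma eig_le_of_rowsum_le {V : Type*} [Fintype V] (G : SimpleGraph V) (D : ℝ)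
    (hD : ∀ i : V, (∑ j, if G.Adj i j then (1:ℝ) else 0) ≤ D) :
    ∀ μ ∈ {μ : ℝ | ∃ v : V → ℝ, v ≠ 0 ∧
      Matrix.mulVec (Matrix.of fun i j => if G.Adj i j then (1:ℝ) else 0) v = μ • v}, μ ≤ D := by
  rintro μ ⟨v, hv, hev⟩
  obtain ⟨i₀, hi₀⟩ : ∃ i, v i ≠ 0 := Function.ne_iff.1 hv
  obtain ⟨i, -, hi⟩ := Finset.exists_max_image Finset.univ (fun i => |v i|) ⟨i₀, Finset.mem_univ _⟩
  have hvi : 0 < |v i| := lt_of_lt_of_le (abs_pos.2 hi₀) (hi i₀ (Finset.mem_univ _))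
  have h1 : μ * v i = ∑ j, (if G.Adj i j then (1:ℝ) else 0) * v j := by
    have := congrFun hev i
    simp only [Matrix.mulVec, dotProduct, Matrix.of_apply, Pi.smul_apply,
      smul_eq_mul] at this
    exact this.symm
  have key : |μ| * |v i| ≤ D * |v i| := by
    calc |μ| * |v i| = |μ * v i| := (abs_mul _ _).symm
      _ = |∑ j, (if G.Adj i j then (1:ℝ) else 0) * v j| := by rw [h1]
      _ ≤ ∑ j, |(if G.Adj i j then (1:ℝ) else 0) * v j| := Finset.abs_sum_le_sum_abs _ _
      _ ≤ ∑ j, (if G.Adj i j then (1:ℝ) else 0) * |v i| := by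
          refine Finset.sum_le_sum fun j _ => ?_
          rw [abs_mul]
          split
          · simpa using hi j (Finset.mem_univ _)
          · simp
      _ = (∑ j, if G.Adj i j then (1:ℝ) else 0) * |v i| := by rw [Finset.sum_mul]
      _ ≤ D * |v i| := mul_le_mul_of_nonneg_right (hD i) (abs_nonneg _)
  exact le_trans (le_abs_self μ) (le_of_mul_le_mul_right key hvi)

lemma specRad_le_of_rowsum_le {V : Type*} [Fintype V] (G : SimpleGraph V) (D : ℝ) (hD0 : 0 ≤ D)
    (hD : ∀ i : V, (∑ j, if G.Adj i j then (1:ℝ) else 0) ≤ D) :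
    specRad G ≤ D :=
  Real.sSup_le (eig_le_of_rowsum_le G D hD) hD0

lemma specSet_bddAbove {V : Type*} [Fintype V] (G : SimpleGraph V) :
    BddAbove {μ : ℝ | ∃ v : V → ℝ, v ≠ 0 ∧
      Matrix.mulVec (Matrix.of fun i j => if G.Adj i j then (1:ℝ) else 0) v = μ • v} := by
  refine ⟨(Fintype.card V : ℝ), fun μ hμ => eig_le_of_rowsum_le G _ (fun i => ?_) μ hμ⟩
  calc (∑ j, if G.Adj i j then (1:ℝ) else 0) ≤ ∑ _j : V, (1:ℝ) := by
        refine Finset.sum_le_sum fun j _ => ?_; split <;> norm_num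
    _ = Fintype.card V := by simp

/-! ### Rayleigh-quotient lower bound for `specRad` -/

lemma lt_specRad {V : Type*} [Fintype V] (G : SimpleGraph V) (x : V → ℝ) (hx : x ≠ 0) (c : ℝ)
    (h : c * (∑ i, x i ^ 2) < ∑ i, x i * ∑ j, if G.Adj i j then x j else 0) :
    c < specRad G := by
  set A : Matrix V V ℝ := Matrix.of fun i j => if G.Adj i j then (1:ℝ) else 0 with hA
  have hherm : A.IsHermitian := by
    ext i j
    simp only [Matrix.conjTranspose_apply, hA, Matrix.of_apply, starRingEnd_apply, star_trivial]
    rw [G.adj_comm]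
  have hsym : (Matrix.toEuclideanLin A).IsSymmetric :=
    Matrix.isHermitian_iff_isSymmetric.1 hherm
  set E := EuclideanSpace ℝ V
  set T : E →ₗ[ℝ] E := Matrix.toEuclideanLin A with hT
  set x' : E := (WithLp.equiv 2 (V → ℝ)).symm x with hx'
  haveI : Nontrivial E := ⟨⟨x', 0, by
    simp only [hx', ne_eq]
    intro hcon
    exact hx (by simpa using congrArg (WithLp.equiv 2 (V → ℝ)) hcon)⟩⟩
  have hev := hsym.hasEigenvalue_iSup_of_finiteDimensional
  set μ : ℝ := ⨆ y : { y : E // y ≠ 0 }, RCLike.re (inner ℝ (T y) (y : E) : ℝ) / ‖(y : E)‖ ^ 2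
    with hμ
  obtain ⟨v, hv⟩ := hev.exists_hasEigenvector
  have hv0 : (v : E) ≠ 0 := hv.right
  have hveq : T v = μ • v := Module.End.mem_eigenspace_iff.1 hv.left
  set w : V → ℝ := WithLp.equiv 2 (V → ℝ) v with hw
  have hmem : μ ∈ {μ : ℝ | ∃ v : V → ℝ, v ≠ 0 ∧ Matrix.mulVec A v = μ • v} := by
    refine ⟨w, ?_, ?_⟩
    · intro hcon
      apply hv0
      have := congrArg (WithLp.equiv 2 (V → ℝ)).symm hcon
      simpa [hw] using this
    · have := congrArg (WithLp.equiv 2 (V → ℝ)) hveq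
      rw [show ∀ y : E, WithLp.equiv 2 (V → ℝ) (T y) = Matrix.mulVec A (WithLp.equiv 2 (V → ℝ) y) from
        fun y => rfl] at this
      simpa [hw] using this
  have hbdd : BddAbove (Set.range fun y : { y : E // y ≠ 0 } =>
      RCLike.re (inner ℝ (T y) (y : E) : ℝ) / ‖(y : E)‖ ^ 2) := by
    refine ⟨‖(LinearMap.toContinuousLinearMap T)‖, ?_⟩
    rintro r ⟨y, rfl⟩
    have hy : (0:ℝ) < ‖(y:E)‖ := norm_pos_iff.2 y.2
    rw [div_le_iff₀ (by positivity)]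
    calc RCLike.re (inner ℝ (T y) (y : E) : ℝ) ≤ ‖T y‖ * ‖(y:E)‖ := by
          simpa using real_inner_le_norm (T y) (y : E)
      _ ≤ ‖(LinearMap.toContinuousLinearMap T)‖ * ‖(y:E)‖ * ‖(y:E)‖ := by
          have h2 : ‖T y‖ ≤ ‖(LinearMap.toContinuousLinearMap T)‖ * ‖(y:E)‖ :=
            (LinearMap.toContinuousLinearMap T).le_opNorm (y : E)
          nlinarith [norm_nonneg (y : E)]
      _ = ‖(LinearMap.toContinuousLinearMap T)‖ * ‖(y:E)‖ ^ 2 := by ring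
  have hx'0 : x' ≠ 0 := by
    intro hcon
    exact hx (by simpa [hx'] using congrArg (WithLp.equiv 2 (V → ℝ)) hcon)
  have hray : RCLike.re (inner ℝ (T x') (x' : E) : ℝ) / ‖(x' : E)‖ ^ 2 ≤ μ :=
    le_ciSup hbdd ⟨x', hx'0⟩
  have hnum : RCLike.re (inner ℝ (T x') (x' : E) : ℝ)
      = ∑ i, x i * ∑ j, if G.Adj i j then x j else 0 := by
    have h1 : (inner ℝ (T x') (x' : E) : ℝ) = ∑ i, (Matrix.mulVec A x) i * x i := by
      rw [PiLp.inner_apply]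
      refine Finset.sum_congr rfl fun i _ => ?_
      have h2 : (T x') i = (Matrix.mulVec A x) i :=
        congrFun (Matrix.ofLp_toEuclideanLin_apply A x') i
      have h3 : x' i = x i := rfl
      rw [RCLike.inner_apply, starRingEnd_apply, star_trivial, h2, h3, mul_comm]
    rw [h1]
    simp only [RCLike.re_to_real]
    refine Finset.sum_congr rfl fun i _ => ?_
    rw [mul_comm, Matrix.mulVec, dotProduct]
    congr 1
    refine Finset.sum_congr rfl fun j _ => ?_
    simp only [hA, Matrix.of_apply, ite_mul, one_mul, zero_mul]
  have hden : ‖(x' : E)‖ ^ 2 = ∑ i, x i ^ 2 := by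
    rw [← real_inner_self_eq_norm_sq, PiLp.inner_apply]
    refine Finset.sum_congr rfl fun i _ => ?_
    simp [hx', RCLike.inner_apply, sq]
  have hdenpos : (0:ℝ) < ∑ i, x i ^ 2 := by
    obtain ⟨i₀, hi₀⟩ : ∃ i, x i ≠ 0 := Function.ne_iff.1 hx
    refine Finset.sum_pos' (fun i _ => sq_nonneg _) ⟨i₀, Finset.mem_univ _, by positivity⟩
  have hcμ : c < μ := by
    rw [hnum, hden] at hray
    have : c < (∑ i, x i * ∑ j, if G.Adj i j then x j else 0) / (∑ i, x i ^ 2) :=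
      (lt_div_iff₀ hdenpos).2 h
    linarith
  exact lt_of_lt_of_le hcμ (le_csSup (specSet_bddAbove G) hmem)

/-! ### Isomorphism invariance -/

lemma specSet_subset_of_iso {V W : Type*} [Fintype V] [Fintype W]
    {G : SimpleGraph V} {H : SimpleGraph W} (e : G ≃g H) (μ : ℝ)
    (hμ : μ ∈ {μ : ℝ | ∃ v : V → ℝ, v ≠ 0 ∧
      Matrix.mulVec (Matrix.of fun i j => if G.Adj i j then (1:ℝ) else 0) v = μ • v}) :
    μ ∈ {μ : ℝ | ∃ v : W → ℝ, v ≠ 0 ∧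
      Matrix.mulVec (Matrix.of fun i j => if H.Adj i j then (1:ℝ) else 0) v = μ • v} := by
  obtain ⟨v, hv, hev⟩ := hμ
  refine ⟨v ∘ e.symm, ?_, ?_⟩
  · intro hcon
    apply hv
    funext k
    have := congrFun hcon (e k)
    simpa using this
  · funext i
    calc (Matrix.mulVec (Matrix.of fun i j => if H.Adj i j then (1:ℝ) else 0) (v ∘ e.symm)) i
        = ∑ j : W, (if H.Adj i j then (1:ℝ) else 0) * v (e.symm j) := by
          simp [Matrix.mulVec, dotProduct]
      _ = ∑ k : V, (if H.Adj i (e k) then (1:ℝ) else 0) * v k := by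
          rw [← Equiv.sum_comp e.toEquiv
            (fun j => (if H.Adj i j then (1:ℝ) else 0) * v (e.symm j))]
          refine Finset.sum_congr rfl fun k _ => ?_
          simp
      _ = ∑ k : V, (if G.Adj (e.symm i) k then (1:ℝ) else 0) * v k := by
          refine Finset.sum_congr rfl fun k _ => ?_
          congr 1
          refine if_congr ?_ rfl rfl
          constructor
          · intro hadj
            have : H.Adj (e (e.symm i)) (e k) := by simpa using hadj
            exact e.map_adj_iff.1 this
          · intro hadj
            have := e.map_adj_iff.2 hadj
            simpa using this
      _ = μ * v (e.symm i) := by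
          have := congrFun hev (e.symm i)
          simpa [Matrix.mulVec, dotProduct] using this
      _ = μ • (v ∘ e.symm) i := rfl

lemma specRad_iso {V W : Type*} [Fintype V] [Fintype W]
    {G : SimpleGraph V} {H : SimpleGraph W} (e : G ≃g H) : specRad G = specRad H := by
  unfold specRad
  congr 1
  ext μ
  exact ⟨fun h => specSet_subset_of_iso e μ h, fun h => specSet_subset_of_iso e.symm μ h⟩

lemma specRad_KplusK_congr {p p' q q' : ℕ} (hp : 0 < p) (hp' : 0 < p') (hq : 0 < q)
    (hq' : 0 < q') (h : p = p') (h' : q = q') :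
    specRad (KplusK p q hp hq) = specRad (KplusK p' q' hp' hq') := by
  subst h; subst h'; rfl

def KplusK_comm (p q : ℕ) (hp : 0 < p) (hq : 0 < q) :
    KplusK p q hp hq ≃g KplusK q p hq hp where
  toEquiv := Equiv.sumComm (Fin p) (Fin q)
  map_rel_iff' := by
    rintro (a | c) (b | d) <;>
      simp [Equiv.sumComm, KplusK_adj_inl_inl, KplusK_adj_inl_inr, KplusK_adj_inr_inl,
        KplusK_adj_inr_inr, and_comm]

/-! ### Row-sum (degree) bound for `KplusK` -/

lemma KplusK_rowsum_le {p q : ℕ} (hp : 0 < p) (hq : 0 < q) (i : Fin p ⊕ Fin q) :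
    (∑ j, if (KplusK p q hp hq).Adj i j then (1:ℝ) else 0) ≤ (max p q : ℕ) := by
  have hsum_ne : ∀ (k : ℕ) (a : Fin k), (∑ b : Fin k, if a ≠ b then (1:ℝ) else 0)
      = (k:ℝ) - 1 := by
    intro k a
    have h : ∀ b : Fin k, (if a ≠ b then (1:ℝ) else 0) = 1 - (if b = a then (1:ℝ) else 0) := by
      intro b
      by_cases hb : b = a
      · subst hb; simp
      · simp [hb, Ne.symm hb]
    rw [Finset.sum_congr rfl fun b _ => h b, Finset.sum_sub_distrib, Finset.sum_ite_eq']
    simp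
  cases i with
  | inl a =>
    rw [Fintype.sum_sum_type]
    have e1 : (∑ b : Fin p, if (KplusK p q hp hq).Adj (Sum.inl a) (Sum.inl b) then (1:ℝ) else 0)
        = (p:ℝ) - 1 := by
      simp only [KplusK_adj_inl_inl]; exact hsum_ne p a
    have e2 : (∑ c : Fin q, if (KplusK p q hp hq).Adj (Sum.inl a) (Sum.inr c) then (1:ℝ) else 0)
        ≤ 1 := by
      simp only [KplusK_adj_inl_inr]
      calc (∑ c : Fin q, if a = ⟨0, hp⟩ ∧ c = ⟨0, hq⟩ then (1:ℝ) else 0)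
          ≤ ∑ c : Fin q, if c = (⟨0, hq⟩ : Fin q) then (1:ℝ) else 0 := by
            refine Finset.sum_le_sum fun c _ => ?_
            split_ifs with h1 h2 <;> simp_all
        _ = 1 := by rw [Finset.sum_ite_eq']; simp
    have hple : (p:ℝ) ≤ (max p q : ℕ) := by exact_mod_cast Nat.cast_le.2 (le_max_left p q)
    rw [e1]
    linarith
  | inr c =>
    rw [Fintype.sum_sum_type]
    have e1 : (∑ b : Fin p, if (KplusK p q hp hq).Adj (Sum.inr c) (Sum.inl b) then (1:ℝ) else 0)
        ≤ 1 := by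
      simp only [KplusK_adj_inr_inl]
      calc (∑ b : Fin p, if b = ⟨0, hp⟩ ∧ c = ⟨0, hq⟩ then (1:ℝ) else 0)
          ≤ ∑ b : Fin p, if b = (⟨0, hp⟩ : Fin p) then (1:ℝ) else 0 := by
            refine Finset.sum_le_sum fun b _ => ?_
            split_ifs with h1 h2 <;> simp_all
        _ = 1 := by rw [Finset.sum_ite_eq']; simp
    have e2 : (∑ d : Fin q, if (KplusK p q hp hq).Adj (Sum.inr c) (Sum.inr d) then (1:ℝ) else 0)
        = (q:ℝ) - 1 := by
      simp only [KplusK_adj_inr_inr]; exact hsum_ne q c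
    have hqle : (q:ℝ) ≤ (max p q : ℕ) := by exact_mod_cast Nat.cast_le.2 (le_max_right p q)
    rw [e2]
    linarith

/-! ### The key lower bound for `K_{n}` with a pendant vertex -/

lemma sum_ite_const {n : ℕ} (z : Fin n) (C D : ℝ) :
    (∑ a : Fin n, if a = z then C else D) = D * ((n:ℝ) - 1) + C := by
  have h : ∀ a : Fin n, (if a = z then C else D) = D + (if a = z then C - D else 0) := by
    intro a; split <;> ring
  rw [Finset.sum_congr rfl fun a _ => h a, Finset.sum_add_distrib, Finset.sum_ite_eq',
    Finset.sum_const, Finset.card_univ, Fintype.card_fin]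
  simp only [Finset.mem_univ, if_true, nsmul_eq_mul]
  ring

lemma lt_specRad_Kn_pendant (n : ℕ) (hn : 2 ≤ n) (h1 : 0 < n) :
    (n:ℝ) - 1 < specRad (KplusK n 1 h1 Nat.one_pos) := by
  set m : ℝ := (n:ℝ) - 1 with hm
  have hm1 : 1 ≤ m := by
    have h2 : (2:ℝ) ≤ (n:ℝ) := by exact_mod_cast hn
    simp only [hm]; linarith
  set t : ℝ := 1/(2*m) with ht
  have hmpos : 0 < m := by linarith
  have ht0 : 0 < t := by rw [ht]; positivity
  have hmt : m * t = 1/2 := by rw [ht]; field_simp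
  set z : Fin n := ⟨0, h1⟩ with hz
  set f : Fin n → ℝ := fun a => if a = z then 1 + t else 1 with hf
  have hfz : f z = 1 + t := by simp [hf]
  have hSf : ∑ a, f a = m + 1 + t := by
    rw [hf]; rw [sum_ite_const z (1+t) 1]; simp only [hm]; ring
  have hQf : ∑ a, f a ^ 2 = m + (1 + t)^2 := by
    have h : ∀ a : Fin n, f a ^ 2 = if a = z then (1+t)^2 else 1 := by
      intro a; by_cases ha : a = z <;> simp [hf, ha]
    rw [Finset.sum_congr rfl fun a _ => h a, sum_ite_const z ((1+t)^2) 1]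
    simp only [hm]; ring
  set x : Fin n ⊕ Fin 1 → ℝ := Sum.elim f (fun _ => t) with hx
  have hx0 : x ≠ 0 := by
    intro hcon
    have : x (Sum.inl z) = 0 := by rw [hcon]; rfl
    rw [hx] at this
    simp only [Sum.elim_inl, hfz] at this
    linarith
  refine lt_specRad _ x hx0 m ?_
  have hzero : ((⟨0, Nat.one_pos⟩ : Fin 1)) = 0 := rfl
  have hden : (∑ i, x i ^ 2) = (m + (1+t)^2) + t^2 := by
    rw [Fintype.sum_sum_type]
    simp only [hx, Sum.elim_inl, Sum.elim_inr, Fin.sum_univ_one]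
    rw [hQf]
  have hWl : ∀ a : Fin n,
      (∑ j, if (KplusK n 1 h1 Nat.one_pos).Adj (Sum.inl a) j then x j else 0)
        = (m + 1 + t - f a) + (if a = z then t else 0) := by
    intro a
    rw [Fintype.sum_sum_type]
    have e1 : (∑ b : Fin n, if (KplusK n 1 h1 Nat.one_pos).Adj (Sum.inl a) (Sum.inl b)
        then x (Sum.inl b) else 0) = (m + 1 + t) - f a := by
      simp only [KplusK_adj_inl_inl, hx, Sum.elim_inl]
      have h : ∀ b : Fin n, (if a ≠ b then f b else 0) = f b - (if b = a then f b else 0) := by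
        intro b
        by_cases hb : b = a
        · subst hb; simp
        · simp [hb, Ne.symm hb]
      rw [Finset.sum_congr rfl fun b _ => h b, Finset.sum_sub_distrib, Finset.sum_ite_eq']
      simp [hSf]
    have e2 : (∑ c : Fin 1, if (KplusK n 1 h1 Nat.one_pos).Adj (Sum.inl a) (Sum.inr c)
        then x (Sum.inr c) else 0) = (if a = z then t else 0) := by
      simp only [KplusK_adj_inl_inr, hx, Sum.elim_inr, Fin.sum_univ_one, hzero]
      simp [hz]
    rw [e1, e2]
  have hWr : (∑ j, if (KplusK n 1 h1 Nat.one_pos).Adj (Sum.inr (0 : Fin 1)) j then x j else 0)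
      = 1 + t := by
    rw [Fintype.sum_sum_type]
    have e1 : (∑ b : Fin n, if (KplusK n 1 h1 Nat.one_pos).Adj (Sum.inr (0:Fin 1)) (Sum.inl b)
        then x (Sum.inl b) else 0) = 1 + t := by
      simp only [KplusK_adj_inr_inl, hx, Sum.elim_inl]
      simp only [hzero, eq_self_iff_true, and_true]
      rw [Finset.sum_ite_eq']
      simp [hfz]
      exact hfz
    have e2 : (∑ c : Fin 1, if (KplusK n 1 h1 Nat.one_pos).Adj (Sum.inr (0:Fin 1)) (Sum.inr c)
        then x (Sum.inr c) else 0) = 0 := by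
      simp [KplusK_adj_inr_inr, Fin.sum_univ_one]
    rw [e1, e2, add_zero]
  have hnum : (∑ i, x i * ∑ j, if (KplusK n 1 h1 Nat.one_pos).Adj i j then x j else 0)
      = (m + 1 + t)^2 - (m + (1+t)^2) + (1+t)*t + t*(1+t) := by
    rw [Fintype.sum_sum_type]
    have e1 : (∑ a : Fin n, x (Sum.inl a) *
        ∑ j, if (KplusK n 1 h1 Nat.one_pos).Adj (Sum.inl a) j then x j else 0)
        = (m + 1 + t)^2 - (m + (1+t)^2) + (1+t)*t := by
      rw [Finset.sum_congr rfl fun a _ => by rw [hWl a]]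
      simp only [hx, Sum.elim_inl]
      have h : ∀ a : Fin n, f a * ((m + 1 + t - f a) + (if a = z then t else 0))
          = (m + 1 + t) * f a - f a ^ 2 + (if a = z then f a * t else 0) := by
        intro a; split <;> ring
      rw [Finset.sum_congr rfl fun a _ => h a, Finset.sum_add_distrib, Finset.sum_sub_distrib,
        Finset.sum_ite_eq', ← Finset.mul_sum, hSf, hQf]
      simp [hfz]
      ring
    have e2 : (∑ c : Fin 1, x (Sum.inr c) *
        ∑ j, if (KplusK n 1 h1 Nat.one_pos).Adj (Sum.inr c) j then x j else 0)
        = t * (1 + t) := by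
      rw [Fin.sum_univ_one, hWr]
      simp [hx]
    rw [e1, e2]
  rw [hden, hnum]
  nlinarith [ht0, hmt, sq_nonneg t]

theorem spectral_KplusK_pendant (l p q : ℕ) (hl : Even l) (hpodd : Odd p)
    (hqodd : Odd q) (hp : 0 < p) (hq : 0 < q) (hpq : p + q = l) :
    specRad (KplusK p q hp hq) ≤ specRad (KplusK (l - 1) 1 (by omega) (by omega)) ∧
    (specRad (KplusK p q hp hq) = specRad (KplusK (l - 1) 1 (by omega) (by omega)) ↔
      p = 1 ∨ q = 1) := by
  by_cases hq1 : q = 1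
  · subst hq1
    have heq : specRad (KplusK p 1 hp hq) = specRad (KplusK (l-1) 1 (by omega) (by omega)) :=
      specRad_KplusK_congr hp (by omega) hq (by omega) (by omega) rfl
    exact ⟨le_of_eq heq, ⟨fun _ => Or.inr rfl, fun _ => heq⟩⟩
  by_cases hp1 : p = 1
  · subst hp1
    have heq : specRad (KplusK 1 q hp hq) = specRad (KplusK (l-1) 1 (by omega) (by omega)) := by
      rw [specRad_iso (KplusK_comm 1 q hp hq)]
      exact specRad_KplusK_congr hq (by omega) hp (by omega) (by omega) rfl
    exact ⟨le_of_eq heq, ⟨fun _ => Or.inl rfl, fun _ => heq⟩⟩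
  · have hp3 : 3 ≤ p := by obtain ⟨k, hk⟩ := hpodd; omega
    have hq3 : 3 ≤ q := by obtain ⟨k, hk⟩ := hqodd; omega
    have h1 : specRad (KplusK p q hp hq) ≤ ((max p q : ℕ) : ℝ) :=
      specRad_le_of_rowsum_le _ _ (by positivity) (KplusK_rowsum_le hp hq)
    have h2 : ((l:ℝ) - 1) - 1 < specRad (KplusK (l-1) 1 (by omega) (by omega)) := by
      have h3 := lt_specRad_Kn_pendant (l-1) (by omega) (by omega)
      have h4 : ((l-1 : ℕ) : ℝ) = (l:ℝ) - 1 := by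
        rw [Nat.cast_sub (by omega)]; norm_num
      rw [h4] at h3
      exact h3
    have hmax : ((max p q : ℕ) : ℝ) ≤ (l:ℝ) - 2 := by
      have h5 : ((max p q : ℕ) : ℝ) ≤ ((l - 3 : ℕ) : ℝ) :=
        Nat.cast_le.2 (Nat.max_le.2 ⟨by omega, by omega⟩)
      have h6 : ((l-3:ℕ):ℝ) = (l:ℝ) - 3 := by rw [Nat.cast_sub (by omega)]; norm_num
      linarith
    have hlt : specRad (KplusK p q hp hq) < specRad (KplusK (l-1) 1 (by omega) (by omega)) := by
      calc specRad (KplusK p q hp hq) ≤ ((max p q : ℕ) : ℝ) := h1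
        _ ≤ (l:ℝ) - 2 := hmax
        _ = ((l:ℝ) - 1) - 1 := by ring
        _ < _ := h2
    exact ⟨hlt.le, ⟨fun h => absurd h hlt.ne,
      fun h => by rcases h with h | h
                  · exact absurd h hp1
                  · exact absurd h hq1⟩⟩
end
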